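/- Let R be the two-sided ideal of T generated by E₁₂, β·E₂₂ and E₂₃. A two-sided ideal I of T satisfies R^N ⊆ I ⊆ R² for some integer N ≥ 2 if and only if there exist integers n ≥ 2 and 1 ≤ n′, n″ ≤ n and a k-subspace V of k[β] with (β^{min(n′,n″)}) ⊆ V such that I = I(n; n′, n″; V). -/

import Mathlib

open Polynomial Matrix

noncomputable section

/-- `Algebra` structure on the quotient of a `k`-algebra by a ring congruence. -/
instance RingConQuotient.algebra (k R : Type*) [CommSemiring k] [Ring R] [Algebra k R]
    (c : RingCon R) : Algebra k c.Quotient where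
  algebraMap := (RingCon.mk' c).comp (algebraMap k R)
  commutes' := by
    intro r x
    induction x using Quotient.ind
    exact congrArg _ (Algebra.commutes r _)
  smul_def' := by
    intro r x
    induction x using Quotient.ind
    exact congrArg _ (Algebra.smul_def r _)

variable (k : Type*) [Field k]

/-- `D` is a `k`-derivation (as a linear endomorphism of a `k`-algebra). -/
def IsDer {R : Type*} [Ring R] [Algebra k R] (D : R →ₗ[k] R) : Prop :=
  ∀ x y : R, D (x * y) = D x * y + x * D y

/-- `D` is an inner derivation. -/
def IsInner {R : Type*} [Ring R] [Algebra k R] (D : R →ₗ[k] R) : Prop :=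
  ∃ a : R, ∀ x : R, D x = a * x - x * a

/-- The ideal `(β^j)` of `k[β]`, as a `k`-submodule. -/
def Bsub (j : ℕ) : Submodule k (Polynomial k) where
  carrier := {p | X ^ j ∣ p}
  zero_mem' := dvd_zero _
  add_mem' := fun h1 h2 => dvd_add h1 h2
  smul_mem' := fun c p hp => by
    simpa [Polynomial.smul_eq_C_mul] using Dvd.dvd.mul_left hp (C c)

lemma mem_Bsub {k : Type*} [Field k] {j : ℕ} {p : Polynomial k} :
    p ∈ Bsub k j ↔ X ^ j ∣ p := Iff.rfl

/-- The algebra `T`: upper triangular 3×3 matrices over `k[β]` whose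
`(1,1)` and `(3,3)` entries are constants. -/
def Tsub : Subalgebra k (Matrix (Fin 3) (Fin 3) (Polynomial k)) where
  carrier := {M | (∀ i j : Fin 3, j < i → M i j = 0) ∧
      (∃ x : k, M 0 0 = C x) ∧ (∃ z : k, M 2 2 = C z)}
  zero_mem' := ⟨fun _ _ _ => rfl, ⟨0, by simp⟩, ⟨0, by simp⟩⟩
  one_mem' := ⟨fun i j h => Matrix.one_apply_ne h.ne', ⟨1, by simp⟩, ⟨1, by simp⟩⟩
  add_mem' := by
    rintro a b ⟨hal, ⟨x, hax⟩, ⟨z, haz⟩⟩ ⟨hbl, ⟨y, hby⟩, ⟨w, hbw⟩⟩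
    refine ⟨fun i j h => by simp [hal i j h, hbl i j h], ⟨x + y, by simp [hax, hby]⟩,
      ⟨z + w, by simp [haz, hbw]⟩⟩
  mul_mem' := by
    rintro a b ⟨hal, ⟨x, hax⟩, ⟨z, haz⟩⟩ ⟨hbl, ⟨y, hby⟩, ⟨w, hbw⟩⟩
    refine ⟨fun i j h => ?_, ⟨x * y, ?_⟩, ⟨z * w, ?_⟩⟩
    · rw [Matrix.mul_apply]
      apply Finset.sum_eq_zero
      intro l _
      rcases lt_or_ge l i with hl | hl
      · rw [hal i l hl, zero_mul]
      · rw [hbl l j (lt_of_lt_of_le h hl), mul_zero]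
    · rw [Matrix.mul_apply, Fin.sum_univ_three,
        hbl 1 0 (by decide), hbl 2 0 (by decide), hax, hby]
      simp
    · rw [Matrix.mul_apply, Fin.sum_univ_three,
        hal 2 0 (by decide), hal 2 1 (by decide), haz, hbw]
      simp
  algebraMap_mem' := by
    intro r
    refine ⟨fun i j h => ?_, ⟨r, ?_⟩, ⟨r, ?_⟩⟩
    · rw [Matrix.algebraMap_matrix_apply, if_neg h.ne']
    · rw [Matrix.algebraMap_matrix_apply, if_pos rfl]; rfl
    · rw [Matrix.algebraMap_matrix_apply, if_pos rfl]; rfl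

/-- The matrix `p·E₁₂` as an element of `T`. -/
def tE12 (p : Polynomial k) : Tsub k :=
  ⟨Matrix.single 0 1 p, by
    refine ⟨fun i j h => ?_, ⟨0, ?_⟩, ⟨0, ?_⟩⟩
    · fin_cases i <;> fin_cases j <;> simp_all [Matrix.single, Matrix.of_apply]
    · simp [Matrix.single, Matrix.of_apply]
    · simp [Matrix.single, Matrix.of_apply]⟩

/-- The matrix `p·E₂₂` as an element of `T`. -/
def tE22 (p : Polynomial k) : Tsub k :=
  ⟨Matrix.single 1 1 p, by
    refine ⟨fun i j h => ?_, ⟨0, ?_⟩, ⟨0, ?_⟩⟩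
    · fin_cases i <;> fin_cases j <;> simp_all [Matrix.single, Matrix.of_apply]
    · simp [Matrix.single, Matrix.of_apply]
    · simp [Matrix.single, Matrix.of_apply]⟩

/-- The matrix `p·E₂₃` as an element of `T`. -/
def tE23 (p : Polynomial k) : Tsub k :=
  ⟨Matrix.single 1 2 p, by
    refine ⟨fun i j h => ?_, ⟨0, ?_⟩, ⟨0, ?_⟩⟩
    · fin_cases i <;> fin_cases j <;> simp_all [Matrix.single, Matrix.of_apply]
    · simp [Matrix.single, Matrix.of_apply]
    · simp [Matrix.single, Matrix.of_apply]⟩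

/-- The matrix `p·E₁₃` as an element of `T`. -/
def tE13 (p : Polynomial k) : Tsub k :=
  ⟨Matrix.single 0 2 p, by
    refine ⟨fun i j h => ?_, ⟨0, ?_⟩, ⟨0, ?_⟩⟩
    · fin_cases i <;> fin_cases j <;> simp_all [Matrix.single, Matrix.of_apply]
    · simp [Matrix.single, Matrix.of_apply]
    · simp [Matrix.single, Matrix.of_apply]⟩

/-- The idempotent `E₁₁` as an element of `T`. -/
def tE11 : Tsub k :=
  ⟨Matrix.single 0 0 1, by
    refine ⟨fun i j h => ?_, ⟨1, ?_⟩, ⟨0, ?_⟩⟩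
    · fin_cases i <;> fin_cases j <;> simp_all [Matrix.single, Matrix.of_apply]
    · simp [Matrix.single, Matrix.of_apply]
    · simp [Matrix.single, Matrix.of_apply]⟩

/-- The idempotent `E₂₂` as an element of `T`. -/
def tE22one : Tsub k := tE22 k 1

/-- The idempotent `E₃₃` as an element of `T`. -/
def tE33 : Tsub k :=
  ⟨Matrix.single 2 2 1, by
    refine ⟨fun i j h => ?_, ⟨0, ?_⟩, ⟨1, ?_⟩⟩
    · fin_cases i <;> fin_cases j <;> simp_all [Matrix.single, Matrix.of_apply]
    · simp [Matrix.single, Matrix.of_apply]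
    · simp [Matrix.single, Matrix.of_apply]⟩

/-- The underlying set of the ideal `I(n; n', n''; V)` of `T`. -/
def Icar (n n' n'' : ℕ) (V : Submodule k (Polynomial k)) : Set (Tsub k) :=
  {M | (M : Matrix (Fin 3) (Fin 3) (Polynomial k)) 0 0 = 0 ∧
       (M : Matrix (Fin 3) (Fin 3) (Polynomial k)) 2 2 = 0 ∧
       X ^ n' ∣ (M : Matrix (Fin 3) (Fin 3) (Polynomial k)) 0 1 ∧
       (M : Matrix (Fin 3) (Fin 3) (Polynomial k)) 0 2 ∈ V ∧
       X ^ n ∣ (M : Matrix (Fin 3) (Fin 3) (Polynomial k)) 1 1 ∧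
       X ^ n'' ∣ (M : Matrix (Fin 3) (Fin 3) (Polynomial k)) 1 2}

variable {k}

lemma Tsub_lower {a : Tsub k} :
    ∀ i j : Fin 3, j < i → (a : Matrix (Fin 3) (Fin 3) (Polynomial k)) i j = 0 := a.2.1

lemma Tsub_00 (a : Tsub k) : ∃ x : k, (a : Matrix (Fin 3) (Fin 3) (Polynomial k)) 0 0 = C x :=
  a.2.2.1

lemma Tsub_22 (a : Tsub k) : ∃ z : k, (a : Matrix (Fin 3) (Fin 3) (Polynomial k)) 2 2 = C z :=
  a.2.2.2

variable (k)

/-- The two-sided ideal `I(n; n', n''; V)` of `T`. -/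
def Itsi (n n' n'' : ℕ) (V : Submodule k (Polynomial k)) (hn' : n' ≤ n) (hn'' : n'' ≤ n)
    (hV : ∀ p : Polynomial k, X ^ min n' n'' ∣ p → p ∈ V) : TwoSidedIdeal (Tsub k) :=
  TwoSidedIdeal.mk' (Icar k n n' n'' V)
    (by
      refine ⟨rfl, rfl, ?_, ?_, ?_, ?_⟩ <;> simp)
    (by
      rintro a b ⟨h1, h2, h3, h4, h5, h6⟩ ⟨g1, g2, g3, g4, g5, g6⟩
      refine ⟨?_, ?_, ?_, ?_, ?_, ?_⟩ <;>
        simp only [AddMemClass.coe_add, Matrix.add_apply]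
      · rw [h1, g1, add_zero]
      · rw [h2, g2, add_zero]
      · exact dvd_add h3 g3
      · exact V.add_mem h4 g4
      · exact dvd_add h5 g5
      · exact dvd_add h6 g6)
    (by
      rintro a ⟨h1, h2, h3, h4, h5, h6⟩
      refine ⟨?_, ?_, ?_, ?_, ?_, ?_⟩ <;>
        simp only [NegMemClass.coe_neg, Matrix.neg_apply]
      · rw [h1, neg_zero]
      · rw [h2, neg_zero]
      · exact dvd_neg.mpr h3
      · exact V.neg_mem h4
      · exact dvd_neg.mpr h5
      · exact dvd_neg.mpr h6)
    (by
      rintro t a ⟨h1, h2, h3, h4, h5, h6⟩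
      have hta : ((t * a : Tsub k) : Matrix (Fin 3) (Fin 3) (Polynomial k)) =
          (t : Matrix (Fin 3) (Fin 3) (Polynomial k)) * a := rfl
      obtain ⟨x, hx⟩ := Tsub_00 t
      refine ⟨?_, ?_, ?_, ?_, ?_, ?_⟩ <;>
        rw [hta, Matrix.mul_apply, Fin.sum_univ_three]
      · rw [h1, Tsub_lower (a := a) 1 0 (by decide), Tsub_lower (a := a) 2 0 (by decide)]
        simp
      · rw [h2, Tsub_lower (a := t) 2 0 (by decide), Tsub_lower (a := t) 2 1 (by decide)]
        simp
      · rw [Tsub_lower (a := a) 2 1 (by decide)]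
        simp only [mul_zero, add_zero]
        exact dvd_add (Dvd.dvd.mul_left h3 _)
          (Dvd.dvd.mul_left ((pow_dvd_pow X hn').trans h5) _)
      · rw [h2]
        simp only [mul_zero, add_zero]
        refine V.add_mem ?_
          (hV _ (Dvd.dvd.mul_left ((pow_dvd_pow X (min_le_right n' n'')).trans h6) _))
        rw [hx]
        have : C x * (a : Matrix (Fin 3) (Fin 3) (Polynomial k)) 0 2 =
            x • (a : Matrix (Fin 3) (Fin 3) (Polynomial k)) 0 2 := by
          rw [Polynomial.smul_eq_C_mul]
        rw [this]
        exact V.smul_mem _ h4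
      · rw [Tsub_lower (a := t) 1 0 (by decide), Tsub_lower (a := a) 2 1 (by decide)]
        simp only [zero_mul, mul_zero, zero_add, add_zero]
        exact Dvd.dvd.mul_left h5 _
      · rw [Tsub_lower (a := t) 1 0 (by decide), h2]
        simp only [zero_mul, mul_zero, zero_add, add_zero]
        exact Dvd.dvd.mul_left h6 _)
    (by
      rintro a t ⟨h1, h2, h3, h4, h5, h6⟩
      have hta : ((a * t : Tsub k) : Matrix (Fin 3) (Fin 3) (Polynomial k)) =
          (a : Matrix (Fin 3) (Fin 3) (Polynomial k)) * t := rfl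
      obtain ⟨z, hz⟩ := Tsub_22 t
      refine ⟨?_, ?_, ?_, ?_, ?_, ?_⟩ <;>
        rw [hta, Matrix.mul_apply, Fin.sum_univ_three]
      · rw [h1, Tsub_lower (a := t) 1 0 (by decide), Tsub_lower (a := t) 2 0 (by decide)]
        simp
      · rw [h2, Tsub_lower (a := a) 2 0 (by decide), Tsub_lower (a := a) 2 1 (by decide)]
        simp
      · rw [h1, Tsub_lower (a := t) 2 1 (by decide)]
        simp only [zero_mul, mul_zero, zero_add, add_zero]
        exact Dvd.dvd.mul_right h3 _
      · rw [h1]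
        simp only [zero_mul, zero_add]
        refine V.add_mem
          (hV _ (Dvd.dvd.mul_right ((pow_dvd_pow X (min_le_left n' n'')).trans h3) _)) ?_
        rw [hz]
        have : (a : Matrix (Fin 3) (Fin 3) (Polynomial k)) 0 2 * C z =
            z • (a : Matrix (Fin 3) (Fin 3) (Polynomial k)) 0 2 := by
          rw [Polynomial.smul_eq_C_mul, mul_comm]
        rw [this]
        exact V.smul_mem _ h4
      · rw [Tsub_lower (a := a) 1 0 (by decide), Tsub_lower (a := t) 2 1 (by decide)]
        simp only [zero_mul, mul_zero, zero_add, add_zero]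
        exact Dvd.dvd.mul_right h5 _
      · rw [Tsub_lower (a := a) 1 0 (by decide)]
        simp only [zero_mul, zero_add]
        exact dvd_add (Dvd.dvd.mul_right ((pow_dvd_pow X hn'').trans h5) _)
          (Dvd.dvd.mul_right h6 _))

/-- The quotient algebra `A = T / I(n; n', n''; V)`. -/
def Aquot (n n' n'' : ℕ) (V : Submodule k (Polynomial k)) (hn' : n' ≤ n) (hn'' : n'' ≤ n)
    (hV : ∀ p : Polynomial k, X ^ min n' n'' ∣ p → p ∈ V) : Type _ :=
  (Itsi k n n' n'' V hn' hn'' hV).ringCon.Quotient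

instance (n n' n'' : ℕ) (V : Submodule k (Polynomial k)) (hn' : n' ≤ n) (hn'' : n'' ≤ n)
    (hV : ∀ p : Polynomial k, X ^ min n' n'' ∣ p → p ∈ V) :
    Ring (Aquot k n n' n'' V hn' hn'' hV) :=
  inferInstanceAs (Ring (Itsi k n n' n'' V hn' hn'' hV).ringCon.Quotient)

instance (n n' n'' : ℕ) (V : Submodule k (Polynomial k)) (hn' : n' ≤ n) (hn'' : n'' ≤ n)
    (hV : ∀ p : Polynomial k, X ^ min n' n'' ∣ p → p ∈ V) :
    Algebra k (Aquot k n n' n'' V hn' hn'' hV) :=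
  inferInstanceAs (Algebra k (Itsi k n n' n'' V hn' hn'' hV).ringCon.Quotient)

/-- The quotient map `T → A`. -/
def Amk (n n' n'' : ℕ) (V : Submodule k (Polynomial k)) (hn' : n' ≤ n) (hn'' : n'' ≤ n)
    (hV : ∀ p : Polynomial k, X ^ min n' n'' ∣ p → p ∈ V) :
    Tsub k →+* Aquot k n n' n'' V hn' hn'' hV :=
  RingCon.mk' (Itsi k n n' n'' V hn' hn'' hV).ringCon


/-- Powers of a two-sided ideal of `T`: `J⁰ = ⊤` and `J^{n+1} = span (Jⁿ · J)`. -/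
def tIdealPow (J : TwoSidedIdeal (Tsub k)) : ℕ → TwoSidedIdeal (Tsub k)
  | 0 => ⊤
  | n + 1 => TwoSidedIdeal.span {z : Tsub k | ∃ x ∈ tIdealPow J n, ∃ y ∈ J, z = x * y}

/-! ### Auxiliary lemmas for `stmt2` -/

lemma mem_Itsi' {n n' n'' : ℕ} {V : Submodule k (Polynomial k)} {hn' : n' ≤ n} {hn'' : n'' ≤ n}
    {hV : ∀ p : Polynomial k, X ^ min n' n'' ∣ p → p ∈ V} {a : Tsub k} :
    a ∈ Itsi k n n' n'' V hn' hn'' hV ↔ a ∈ Icar k n n' n'' V :=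
  TwoSidedIdeal.mem_mk' _ _ _ _ _ _ _

lemma tE12_mul_tE22 (p q : Polynomial k) : tE12 k p * tE22 k q = tE12 k (p * q) :=
  Subtype.ext (Matrix.single_mul_single_same ..)

lemma tE12_mul_tE23 (p q : Polynomial k) : tE12 k p * tE23 k q = tE13 k (p * q) :=
  Subtype.ext (Matrix.single_mul_single_same ..)

lemma tE22_mul_tE22 (p q : Polynomial k) : tE22 k p * tE22 k q = tE22 k (p * q) :=
  Subtype.ext (Matrix.single_mul_single_same ..)

lemma tE22_mul_tE23 (p q : Polynomial k) : tE22 k p * tE23 k q = tE23 k (p * q) :=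
  Subtype.ext (Matrix.single_mul_single_same ..)

lemma tE12_add (p q : Polynomial k) : tE12 k (p + q) = tE12 k p + tE12 k q :=
  Subtype.ext (Matrix.single_add _ _ _ _)

lemma tE13_add (p q : Polynomial k) : tE13 k (p + q) = tE13 k p + tE13 k q :=
  Subtype.ext (Matrix.single_add _ _ _ _)

lemma tE22_add (p q : Polynomial k) : tE22 k (p + q) = tE22 k p + tE22 k q :=
  Subtype.ext (Matrix.single_add _ _ _ _)

lemma tE23_add (p q : Polynomial k) : tE23 k (p + q) = tE23 k p + tE23 k q :=
  Subtype.ext (Matrix.single_add _ _ _ _)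

lemma tE12_zero : tE12 k 0 = 0 := Subtype.ext (Matrix.single_zero _ _)
lemma tE13_zero : tE13 k 0 = 0 := Subtype.ext (Matrix.single_zero _ _)
lemma tE22_zero : tE22 k 0 = 0 := Subtype.ext (Matrix.single_zero _ _)
lemma tE23_zero : tE23 k 0 = 0 := Subtype.ext (Matrix.single_zero _ _)

lemma tE13_smul (c : k) (p : Polynomial k) : tE13 k (c • p) = c • tE13 k p :=
  Subtype.ext (by
    show Matrix.single 0 2 (c • p) = c • Matrix.single 0 2 p
    rw [Matrix.smul_single])

/-- Decomposition of an element of `T` with vanishing corner entries. -/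
lemma Tsub_decomp (a : Tsub k)
    (h0 : (a : Matrix (Fin 3) (Fin 3) (Polynomial k)) 0 0 = 0)
    (h2 : (a : Matrix (Fin 3) (Fin 3) (Polynomial k)) 2 2 = 0) :
    a = tE12 k ((a : Matrix (Fin 3) (Fin 3) (Polynomial k)) 0 1)
      + tE13 k ((a : Matrix (Fin 3) (Fin 3) (Polynomial k)) 0 2)
      + tE22 k ((a : Matrix (Fin 3) (Fin 3) (Polynomial k)) 1 1)
      + tE23 k ((a : Matrix (Fin 3) (Fin 3) (Polynomial k)) 1 2) := by
  have hl := a.2.1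
  apply Subtype.ext
  show (a : Matrix (Fin 3) (Fin 3) (Polynomial k)) = _
  ext i j
  fin_cases i <;> fin_cases j <;>
    simp [tE12, tE13, tE22, tE23, Matrix.single, h0, h2,
      hl 1 0 (by decide), hl 2 0 (by decide), hl 2 1 (by decide)]

lemma corner01 (a : Tsub k) :
    tE11 k * a * tE22one k = tE12 k ((a : Matrix (Fin 3) (Fin 3) (Polynomial k)) 0 1) := by
  apply Subtype.ext
  show Matrix.single 0 0 1 * (a : Matrix (Fin 3) (Fin 3) (Polynomial k)) *
      Matrix.single 1 1 1 = _
  ext i j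
  fin_cases i <;> fin_cases j <;>
    simp [tE12, tE13, tE22, tE23, Matrix.mul_apply, Fin.sum_univ_three, Matrix.single]

lemma corner02 (a : Tsub k) :
    tE11 k * a * tE33 k = tE13 k ((a : Matrix (Fin 3) (Fin 3) (Polynomial k)) 0 2) := by
  apply Subtype.ext
  show Matrix.single 0 0 1 * (a : Matrix (Fin 3) (Fin 3) (Polynomial k)) *
      Matrix.single 2 2 1 = _
  ext i j
  fin_cases i <;> fin_cases j <;>
    simp [tE12, tE13, tE22, tE23, Matrix.mul_apply, Fin.sum_univ_three, Matrix.single]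

lemma corner11 (a : Tsub k) :
    tE22one k * a * tE22one k = tE22 k ((a : Matrix (Fin 3) (Fin 3) (Polynomial k)) 1 1) := by
  apply Subtype.ext
  show Matrix.single 1 1 1 * (a : Matrix (Fin 3) (Fin 3) (Polynomial k)) *
      Matrix.single 1 1 1 = _
  ext i j
  fin_cases i <;> fin_cases j <;>
    simp [tE12, tE13, tE22, tE23, Matrix.mul_apply, Fin.sum_univ_three, Matrix.single]

lemma corner12 (a : Tsub k) :
    tE22one k * a * tE33 k = tE23 k ((a : Matrix (Fin 3) (Fin 3) (Polynomial k)) 1 2) := by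
  apply Subtype.ext
  show Matrix.single 1 1 1 * (a : Matrix (Fin 3) (Fin 3) (Polynomial k)) *
      Matrix.single 2 2 1 = _
  ext i j
  fin_cases i <;> fin_cases j <;>
    simp [tE12, tE13, tE22, tE23, Matrix.mul_apply, Fin.sum_univ_three, Matrix.single]

lemma tsi_span_le {s : Set (Tsub k)} {I : TwoSidedIdeal (Tsub k)} (h : s ⊆ I) :
    TwoSidedIdeal.span s ≤ I :=
  fun _ hx => TwoSidedIdeal.mem_span_iff.mp hx I h

/-- The ideal `R^N` for `N ≥ 1` (with `R` the arrow ideal). -/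
def pIdeal (N : ℕ) : TwoSidedIdeal (Tsub k) :=
  Itsi k N (N - 1) (N - 1) (Bsub k (N - 2)) (Nat.sub_le _ _) (Nat.sub_le _ _)
    (fun p hp => (pow_dvd_pow X (by omega : N - 2 ≤ min (N - 1) (N - 1))).trans hp)

lemma mem_pIdeal {N : ℕ} {a : Tsub k} :
    a ∈ pIdeal k N ↔
      ((a : Matrix (Fin 3) (Fin 3) (Polynomial k)) 0 0 = 0 ∧
       (a : Matrix (Fin 3) (Fin 3) (Polynomial k)) 2 2 = 0 ∧
       X ^ (N - 1) ∣ (a : Matrix (Fin 3) (Fin 3) (Polynomial k)) 0 1 ∧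
       X ^ (N - 2) ∣ (a : Matrix (Fin 3) (Fin 3) (Polynomial k)) 0 2 ∧
       X ^ N ∣ (a : Matrix (Fin 3) (Fin 3) (Polynomial k)) 1 1 ∧
       X ^ (N - 1) ∣ (a : Matrix (Fin 3) (Fin 3) (Polynomial k)) 1 2) :=
  mem_Itsi' k

lemma tE12_mem_pIdeal {N : ℕ} {p : Polynomial k} (h : X ^ (N - 1) ∣ p) :
    tE12 k p ∈ pIdeal k N := by
  rw [mem_pIdeal]
  refine ⟨?_, ?_, ?_, ?_, ?_, ?_⟩ <;>
    simp [tE12, Matrix.single, h, mem_Bsub]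

lemma tE13_mem_pIdeal {N : ℕ} {p : Polynomial k} (h : X ^ (N - 2) ∣ p) :
    tE13 k p ∈ pIdeal k N := by
  rw [mem_pIdeal]
  refine ⟨?_, ?_, ?_, ?_, ?_, ?_⟩ <;>
    simp [tE13, Matrix.single, h, mem_Bsub]

lemma tE22_mem_pIdeal {N : ℕ} {p : Polynomial k} (h : X ^ N ∣ p) :
    tE22 k p ∈ pIdeal k N := by
  rw [mem_pIdeal]
  refine ⟨?_, ?_, ?_, ?_, ?_, ?_⟩ <;>
    simp [tE22, Matrix.single, h, mem_Bsub]

lemma tE23_mem_pIdeal {N : ℕ} {p : Polynomial k} (h : X ^ (N - 1) ∣ p) :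
    tE23 k p ∈ pIdeal k N := by
  rw [mem_pIdeal]
  refine ⟨?_, ?_, ?_, ?_, ?_, ?_⟩ <;>
    simp [tE23, Matrix.single, h, mem_Bsub]

/-- The arrow ideal `R` equals `pIdeal 1`. -/
lemma span_gens_eq : TwoSidedIdeal.span {tE12 k 1, tE22 k X, tE23 k 1} = pIdeal k 1 := by
  apply le_antisymm
  · apply tsi_span_le
    rintro x (rfl | rfl | rfl)
    · exact tE12_mem_pIdeal k (by simp)
    · exact tE22_mem_pIdeal k (by simp)
    · exact tE23_mem_pIdeal k (by simp)
  · intro a ha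
    rw [mem_pIdeal] at ha
    obtain ⟨h0, h2, -, -, h11, -⟩ := ha
    obtain ⟨q, hq⟩ := h11
    rw [Tsub_decomp k a h0 h2]
    have m12 : tE12 k ((a : Matrix (Fin 3) (Fin 3) (Polynomial k)) 0 1) ∈
        TwoSidedIdeal.span {tE12 k 1, tE22 k X, tE23 k 1} := by
      rw [show tE12 k ((a : Matrix (Fin 3) (Fin 3) (Polynomial k)) 0 1) =
          tE12 k 1 * tE22 k ((a : Matrix (Fin 3) (Fin 3) (Polynomial k)) 0 1) by
        rw [tE12_mul_tE22, one_mul]]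
      exact TwoSidedIdeal.mul_mem_right _ _ _ (TwoSidedIdeal.subset_span (by simp))
    have m13 : tE13 k ((a : Matrix (Fin 3) (Fin 3) (Polynomial k)) 0 2) ∈
        TwoSidedIdeal.span {tE12 k 1, tE22 k X, tE23 k 1} := by
      rw [show tE13 k ((a : Matrix (Fin 3) (Fin 3) (Polynomial k)) 0 2) =
          tE12 k 1 * tE23 k ((a : Matrix (Fin 3) (Fin 3) (Polynomial k)) 0 2) by
        rw [tE12_mul_tE23, one_mul]]
      exact TwoSidedIdeal.mul_mem_right _ _ _ (TwoSidedIdeal.subset_span (by simp))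
    have m22 : tE22 k ((a : Matrix (Fin 3) (Fin 3) (Polynomial k)) 1 1) ∈
        TwoSidedIdeal.span {tE12 k 1, tE22 k X, tE23 k 1} := by
      rw [hq, show tE22 k (X ^ 1 * q) = tE22 k X * tE22 k q by
        rw [tE22_mul_tE22, pow_one]]
      exact TwoSidedIdeal.mul_mem_right _ _ _ (TwoSidedIdeal.subset_span (by simp))
    have m23 : tE23 k ((a : Matrix (Fin 3) (Fin 3) (Polynomial k)) 1 2) ∈
        TwoSidedIdeal.span {tE12 k 1, tE22 k X, tE23 k 1} := by
      rw [show tE23 k ((a : Matrix (Fin 3) (Fin 3) (Polynomial k)) 1 2) =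
          tE22 k ((a : Matrix (Fin 3) (Fin 3) (Polynomial k)) 1 2) * tE23 k 1 by
        rw [tE22_mul_tE23, mul_one]]
      exact TwoSidedIdeal.mul_mem_left _ _ _ (TwoSidedIdeal.subset_span (by simp))
    exact add_mem (add_mem (add_mem m12 m13) m22) m23

/-- The multiplication step for powers of the arrow ideal. -/
lemma pIdeal_step (N : ℕ) (hN : 1 ≤ N) :
    TwoSidedIdeal.span {z : Tsub k | ∃ x ∈ pIdeal k N, ∃ y ∈ pIdeal k 1, z = x * y} =
      pIdeal k (N + 1) := by
  apply le_antisymm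
  · apply tsi_span_le
    rintro z ⟨x, hx, y, hy, rfl⟩
    rw [mem_pIdeal] at hx hy
    obtain ⟨hx0, hx2, hx01, hx02, hx11, hx12⟩ := hx
    obtain ⟨hy0, hy2, -, -, hy11, -⟩ := hy
    have hco : ((x * y : Tsub k) : Matrix (Fin 3) (Fin 3) (Polynomial k)) =
        (x : Matrix (Fin 3) (Fin 3) (Polynomial k)) * y := rfl
    have hxl := Tsub_lower (a := x)
    have hyl := Tsub_lower (a := y)
    rw [SetLike.mem_coe, mem_pIdeal]
    refine ⟨?_, ?_, ?_, ?_, ?_, ?_⟩ <;>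
      rw [hco, Matrix.mul_apply, Fin.sum_univ_three]
    · rw [hx0, hyl 1 0 (by decide), hyl 2 0 (by decide)]; simp
    · rw [hx2, hxl 2 0 (by decide), hxl 2 1 (by decide)]; simp
    · rw [hx0, hyl 2 1 (by decide)]
      simp only [zero_mul, mul_zero, zero_add, add_zero]
      have : (X : Polynomial k) ^ ((N + 1) - 1) = X ^ (N - 1) * X ^ 1 := by
        rw [← pow_add]; congr 1; omega
      rw [this]
      exact mul_dvd_mul hx01 (by simpa using hy11)
    · rw [hx0, hy2]
      simp only [zero_mul, mul_zero, zero_add, add_zero]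
      show X ^ ((N + 1) - 2) ∣ _
      have h1 : (N + 1) - 2 = N - 1 := by omega
      rw [h1]
      exact hx01.mul_right _
    · rw [hxl 1 0 (by decide), hyl 2 1 (by decide)]
      simp only [zero_mul, mul_zero, zero_add, add_zero]
      have : (X : Polynomial k) ^ (N + 1) = X ^ N * X ^ 1 := by rw [← pow_add]
      rw [this]
      exact mul_dvd_mul hx11 (by simpa using hy11)
    · rw [hxl 1 0 (by decide), hy2]
      simp only [zero_mul, mul_zero, zero_add, add_zero]
      have h1 : (N + 1) - 1 = N := by omega
      rw [h1]
      exact hx11.mul_right _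
  · intro a ha
    rw [mem_pIdeal] at ha
    obtain ⟨h0, h2, h01, h02, h11, h12⟩ := ha
    have e1 : (N + 1) - 1 = N := by omega
    have e2 : (N + 1) - 2 = N - 1 := by omega
    rw [e1] at h01 h12
    rw [e2] at h02
    obtain ⟨q01, hq01⟩ := h01
    obtain ⟨q02, hq02⟩ := h02
    obtain ⟨q11, hq11⟩ := h11
    obtain ⟨q12, hq12⟩ := h12
    rw [Tsub_decomp k a h0 h2]
    have hXN : (X : Polynomial k) ^ N = X ^ (N - 1) * X := by
      rw [← pow_succ]; congr 1; omega
    have m12 : tE12 k ((a : Matrix (Fin 3) (Fin 3) (Polynomial k)) 0 1) ∈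
        TwoSidedIdeal.span {z : Tsub k | ∃ x ∈ pIdeal k N, ∃ y ∈ pIdeal k 1, z = x * y} := by
      apply TwoSidedIdeal.subset_span
      refine ⟨tE12 k (X ^ (N - 1)), tE12_mem_pIdeal k dvd_rfl,
        tE22 k (X * q01), tE22_mem_pIdeal k (by simpa using (dvd_mul_right X q01)), ?_⟩
      rw [tE12_mul_tE22, hq01, hXN, mul_assoc]
    have m13 : tE13 k ((a : Matrix (Fin 3) (Fin 3) (Polynomial k)) 0 2) ∈
        TwoSidedIdeal.span {z : Tsub k | ∃ x ∈ pIdeal k N, ∃ y ∈ pIdeal k 1, z = x * y} := by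
      apply TwoSidedIdeal.subset_span
      refine ⟨tE12 k (X ^ (N - 1)), tE12_mem_pIdeal k dvd_rfl,
        tE23 k q02, tE23_mem_pIdeal k (by simp), ?_⟩
      rw [tE12_mul_tE23, hq02]
    have m22 : tE22 k ((a : Matrix (Fin 3) (Fin 3) (Polynomial k)) 1 1) ∈
        TwoSidedIdeal.span {z : Tsub k | ∃ x ∈ pIdeal k N, ∃ y ∈ pIdeal k 1, z = x * y} := by
      apply TwoSidedIdeal.subset_span
      refine ⟨tE22 k (X ^ N), tE22_mem_pIdeal k dvd_rfl,
        tE22 k (X * q11), tE22_mem_pIdeal k (by simpa using (dvd_mul_right X q11)), ?_⟩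
      rw [tE22_mul_tE22, hq11]; congr 1; ring
    have m23 : tE23 k ((a : Matrix (Fin 3) (Fin 3) (Polynomial k)) 1 2) ∈
        TwoSidedIdeal.span {z : Tsub k | ∃ x ∈ pIdeal k N, ∃ y ∈ pIdeal k 1, z = x * y} := by
      apply TwoSidedIdeal.subset_span
      refine ⟨tE22 k (X ^ N), tE22_mem_pIdeal k dvd_rfl,
        tE23 k q12, tE23_mem_pIdeal k (by simp), ?_⟩
      rw [tE22_mul_tE23, hq12]
    exact add_mem (add_mem (add_mem m12 m13) m22) m23

/-- `R^N = pIdeal N` for `N ≥ 1`. -/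
lemma tIdealPow_eq (N : ℕ) (hN : 1 ≤ N) :
    tIdealPow k (TwoSidedIdeal.span {tE12 k 1, tE22 k X, tE23 k 1}) N = pIdeal k N := by
  induction N with
  | zero => omega
  | succ N ih =>
    rcases Nat.eq_or_lt_of_le hN with h1 | h1
    · -- N + 1 = 1
      have hN0 : N = 0 := by omega
      subst hN0
      show TwoSidedIdeal.span _ = _
      rw [← span_gens_eq]
      apply le_antisymm
      · apply tsi_span_le
        rintro z ⟨x, -, y, hy, rfl⟩
        exact TwoSidedIdeal.mul_mem_left _ _ _ hy
      · intro a ha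
        exact TwoSidedIdeal.subset_span ⟨1, trivial, a, ha, (one_mul a).symm⟩
    · have hN1 : 1 ≤ N := by omega
      show TwoSidedIdeal.span _ = _
      have hset : {z : Tsub k | ∃ x ∈ tIdealPow k
            (TwoSidedIdeal.span {tE12 k 1, tE22 k X, tE23 k 1}) N,
            ∃ y ∈ TwoSidedIdeal.span {tE12 k 1, tE22 k X, tE23 k 1}, z = x * y} =
          {z : Tsub k | ∃ x ∈ pIdeal k N, ∃ y ∈ pIdeal k 1, z = x * y} := by
        rw [ih hN1, span_gens_eq]
      rw [hset, pIdeal_step k N hN1]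

/-- An ideal of `k[β]` squeezed between `(β^N)` and `(β^a)` is `(β^n)` for some `a ≤ n`. -/
lemma exists_pow_ideal (S : Ideal (Polynomial k)) (N a : ℕ) (hN : X ^ N ∈ S)
    (hS : ∀ p ∈ S, X ^ a ∣ p) :
    ∃ n, a ≤ n ∧ ∀ p : Polynomial k, p ∈ S ↔ X ^ n ∣ p := by
  obtain ⟨g, hg⟩ := Submodule.IsPrincipal.principal S
  have hgN : g ∣ X ^ N := by
    rw [hg, Ideal.submodule_span_eq, Ideal.mem_span_singleton] at hN
    exact hN
  obtain ⟨n, -, hass⟩ := (dvd_prime_pow Polynomial.prime_X N).mp hgN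
  refine ⟨n, ?_, fun p => ?_⟩
  · have hgS : g ∈ S := hg ▸ Submodule.mem_span_singleton_self g
    exact (pow_dvd_pow_iff X_ne_zero Polynomial.not_isUnit_X).mp ((hS g hgS).trans hass.dvd)
  · rw [hg, Ideal.submodule_span_eq, Ideal.mem_span_singleton]
    exact hass.dvd_iff_dvd_left

/-- the ideal `{p | p·E₁₂ ∈ I}` of `k[β]`. -/
def Sid1 (I : TwoSidedIdeal (Tsub k)) : Ideal (Polynomial k) where
  carrier := {p | tE12 k p ∈ I}
  zero_mem' := by show tE12 k 0 ∈ I; rw [tE12_zero]; exact zero_mem _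
  add_mem' := fun {p q} hp hq => by
    show tE12 k (p + q) ∈ I
    rw [tE12_add]; exact add_mem hp hq
  smul_mem' := fun c p hp => by
    show tE12 k (c • p) ∈ I
    rw [smul_eq_mul, mul_comm, ← tE12_mul_tE22]
    exact I.mul_mem_right _ _ hp

/-- the ideal `{p | p·E₂₂ ∈ I}` of `k[β]`. -/
def Sid2 (I : TwoSidedIdeal (Tsub k)) : Ideal (Polynomial k) where
  carrier := {p | tE22 k p ∈ I}
  zero_mem' := by show tE22 k 0 ∈ I; rw [tE22_zero]; exact zero_mem _
  add_mem' := fun {p q} hp hq => by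
    show tE22 k (p + q) ∈ I
    rw [tE22_add]; exact add_mem hp hq
  smul_mem' := fun c p hp => by
    show tE22 k (c • p) ∈ I
    rw [smul_eq_mul, ← tE22_mul_tE22]
    exact I.mul_mem_left _ _ hp

/-- the ideal `{p | p·E₂₃ ∈ I}` of `k[β]`. -/
def Sid3 (I : TwoSidedIdeal (Tsub k)) : Ideal (Polynomial k) where
  carrier := {p | tE23 k p ∈ I}
  zero_mem' := by show tE23 k 0 ∈ I; rw [tE23_zero]; exact zero_mem _
  add_mem' := fun {p q} hp hq => by
    show tE23 k (p + q) ∈ I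
    rw [tE23_add]; exact add_mem hp hq
  smul_mem' := fun c p hp => by
    show tE23 k (c • p) ∈ I
    rw [smul_eq_mul, ← tE22_mul_tE23]
    exact I.mul_mem_left _ _ hp

/-- the `k`-subspace `{p | p·E₁₃ ∈ I}` of `k[β]`. -/
def Vsub (I : TwoSidedIdeal (Tsub k)) : Submodule k (Polynomial k) where
  carrier := {p | tE13 k p ∈ I}
  zero_mem' := by show tE13 k 0 ∈ I; rw [tE13_zero]; exact zero_mem _
  add_mem' := fun {p q} hp hq => by
    show tE13 k (p + q) ∈ I
    rw [tE13_add]; exact add_mem hp hq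
  smul_mem' := fun c p hp => by
    show tE13 k (c • p) ∈ I
    rw [tE13_smul, Algebra.smul_def]
    exact I.mul_mem_left _ _ hp

/-- the admissible ideals of `T`, i.e. the two-sided ideals `I` with
`R^N ⊆ I ⊆ R²` for some `N ≥ 2`, are exactly the ideals `I(n; n', n''; V)`. -/
theorem stmt2 (I : TwoSidedIdeal (Tsub k)) :
    (∃ N : ℕ, 2 ≤ N ∧
        tIdealPow k (TwoSidedIdeal.span {tE12 k 1, tE22 k X, tE23 k 1}) N ≤ I ∧
        I ≤ tIdealPow k (TwoSidedIdeal.span {tE12 k 1, tE22 k X, tE23 k 1}) 2) ↔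
    (∃ (n n' n'' : ℕ) (V : Submodule k (Polynomial k))
        (_ : 2 ≤ n) (_ : 1 ≤ n') (_ : 1 ≤ n'') (hn' : n' ≤ n) (hn'' : n'' ≤ n)
        (hV : ∀ p : Polynomial k, X ^ min n' n'' ∣ p → p ∈ V),
        I = Itsi k n n' n'' V hn' hn'' hV) := by
  constructor
  · rintro ⟨N, hN2, hlow, hupp⟩
    rw [tIdealPow_eq k N (by omega)] at hlow
    rw [tIdealPow_eq k 2 (by omega)] at hupp
    obtain ⟨n, hn2, hSn⟩ := exists_pow_ideal k (Sid2 k I) N 2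
      (hlow (tE22_mem_pIdeal k dvd_rfl))
      (fun p hp => by
        have h := (mem_pIdeal k).mp (hupp hp)
        simpa [tE22, Matrix.single] using h.2.2.2.2.1)
    obtain ⟨n', hn1', hSn'⟩ := exists_pow_ideal k (Sid1 k I) N 1
      (hlow (tE12_mem_pIdeal k (pow_dvd_pow X (by omega : N - 1 ≤ N))))
      (fun p hp => by
        have h := (mem_pIdeal k).mp (hupp hp)
        simpa [tE12, Matrix.single] using h.2.2.1)
    obtain ⟨n'', hn1'', hSn''⟩ := exists_pow_ideal k (Sid3 k I) N 1
      (hlow (tE23_mem_pIdeal k (pow_dvd_pow X (by omega : N - 1 ≤ N))))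
      (fun p hp => by
        have h := (mem_pIdeal k).mp (hupp hp)
        simpa [tE23, Matrix.single] using h.2.2.2.2.2)
    have h22n : tE22 k (X ^ n) ∈ I := (hSn _).mpr dvd_rfl
    have hn'le : n' ≤ n := by
      have h1 : (X : Polynomial k) ^ n ∈ Sid1 k I := by
        show tE12 k ((X : Polynomial k) ^ n) ∈ I
        rw [show tE12 k ((X : Polynomial k) ^ n) = tE12 k 1 * tE22 k (X ^ n) by
          rw [tE12_mul_tE22, one_mul]]
        exact I.mul_mem_left _ _ h22n
      exact (pow_dvd_pow_iff X_ne_zero Polynomial.not_isUnit_X).mp ((hSn' _).mp h1)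
    have hn''le : n'' ≤ n := by
      have h1 : (X : Polynomial k) ^ n ∈ Sid3 k I := by
        show tE23 k ((X : Polynomial k) ^ n) ∈ I
        rw [show tE23 k ((X : Polynomial k) ^ n) = tE22 k (X ^ n) * tE23 k 1 by
          rw [tE22_mul_tE23, mul_one]]
        exact I.mul_mem_right _ _ h22n
      exact (pow_dvd_pow_iff X_ne_zero Polynomial.not_isUnit_X).mp ((hSn'' _).mp h1)
    have hV : ∀ p : Polynomial k, X ^ min n' n'' ∣ p → p ∈ Vsub k I := by
      intro p hp
      rcases le_total n' n'' with h | h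
      · rw [min_eq_left h] at hp
        obtain ⟨q, rfl⟩ := hp
        show tE13 k (X ^ n' * q) ∈ I
        rw [← tE12_mul_tE23]
        exact I.mul_mem_right _ _ ((hSn' _).mpr dvd_rfl)
      · rw [min_eq_right h] at hp
        obtain ⟨q, rfl⟩ := hp
        show tE13 k (X ^ n'' * q) ∈ I
        rw [mul_comm, ← tE12_mul_tE23]
        exact I.mul_mem_left _ _ ((hSn'' _).mpr dvd_rfl)
    refine ⟨n, n', n'', Vsub k I, hn2, hn1', hn1'', hn'le, hn''le, hV, ?_⟩
    apply TwoSidedIdeal.ext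
    intro a
    constructor
    · intro ha
      rw [mem_Itsi']
      have h2' := (mem_pIdeal k).mp (hupp ha)
      refine ⟨h2'.1, h2'.2.1, ?_, ?_, ?_, ?_⟩
      · apply (hSn' _).mp
        show tE12 k _ ∈ I
        rw [← corner01]
        exact I.mul_mem_right _ _ (I.mul_mem_left _ _ ha)
      · show tE13 k _ ∈ I
        rw [← corner02]
        exact I.mul_mem_right _ _ (I.mul_mem_left _ _ ha)
      · apply (hSn _).mp
        show tE22 k _ ∈ I
        rw [← corner11]
        exact I.mul_mem_right _ _ (I.mul_mem_left _ _ ha)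
      · apply (hSn'' _).mp
        show tE23 k _ ∈ I
        rw [← corner12]
        exact I.mul_mem_right _ _ (I.mul_mem_left _ _ ha)
    · intro ha
      rw [mem_Itsi'] at ha
      obtain ⟨h0, h2, h01, h02v, h11, h12⟩ := ha
      rw [Tsub_decomp k a h0 h2]
      have m12 : tE12 k ((a : Matrix (Fin 3) (Fin 3) (Polynomial k)) 0 1) ∈ I :=
        (hSn' _).mpr h01
      have m13 : tE13 k ((a : Matrix (Fin 3) (Fin 3) (Polynomial k)) 0 2) ∈ I := h02v
      have m22 : tE22 k ((a : Matrix (Fin 3) (Fin 3) (Polynomial k)) 1 1) ∈ I :=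
        (hSn _).mpr h11
      have m23 : tE23 k ((a : Matrix (Fin 3) (Fin 3) (Polynomial k)) 1 2) ∈ I :=
        (hSn'' _).mpr h12
      exact add_mem (add_mem (add_mem m12 m13) m22) m23
  · rintro ⟨n, n', n'', V, hn2, h1n', h1n'', hn', hn'', hV, rfl⟩
    refine ⟨n + 2, by omega, ?_, ?_⟩
    · rw [tIdealPow_eq k (n + 2) (by omega)]
      intro a ha
      rw [mem_pIdeal] at ha
      obtain ⟨h0, h2, h01, h02, h11, h12⟩ := ha
      rw [mem_Itsi']
      refine ⟨h0, h2, (pow_dvd_pow X (by omega : n' ≤ n + 2 - 1)).trans h01,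
        hV _ ((pow_dvd_pow X
          (by have := (min_le_left n' n'').trans hn'; omega : min n' n'' ≤ n + 2 - 2)).trans h02),
        (pow_dvd_pow X (by omega : n ≤ n + 2)).trans h11,
        (pow_dvd_pow X (by omega : n'' ≤ n + 2 - 1)).trans h12⟩
    · rw [tIdealPow_eq k 2 (by omega)]
      intro a ha
      rw [mem_Itsi'] at ha
      obtain ⟨h0, h2, h01, h02, h11, h12⟩ := ha
      rw [mem_pIdeal]
      exact ⟨h0, h2, (pow_dvd_pow X (by omega : 2 - 1 ≤ n')).trans h01,
        by simpa using (one_dvd _ : (1 : Polynomial k) ∣ _),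
        (pow_dvd_pow X hn2).trans h11,
        (pow_dvd_pow X (by omega : 2 - 1 ≤ n'')).trans h12⟩

end
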